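/- Let R = (r^1,...,r^n) ∈ Z^{n×n} be invertible, let Λ = R^{−1}Z^n, and suppose λ ∈ R^n_{>0} satisfies λ + (R^n_{≥0} ∩ Λ) = int(R^n_{≥0}) ∩ Λ. Then for every k ∈ [n], λ_k = min{ μ_k : μ ∈ R^n_{≥0} ∩ Λ, μ_k ≠ 0 }. -/
import Mathlib


open scoped BigOperators

noncomputable section

namespace ICRPaper

/-- A real vector is integral if every coordinate is an integer. -/
def IsIntegral {n : ℕ} (x : Fin n → ℝ) : Prop := ∀ i, ∃ z : ℤ, x i = (z : ℝ)

/-- The lattice of integer points of `ℝ^n`. -/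
def intLattice (n : ℕ) : Set (Fin n → ℝ) := {x | IsIntegral x}

/-- Standard dot product on `ℝ^n`. -/
def dot {n : ℕ} (x y : Fin n → ℝ) : ℝ := ∑ i, x i * y i

/-- `pos r`: the cone of non-negative real combinations of the vectors `r i`. -/
def pos {n : ℕ} {ι : Type} [Fintype ι] (r : ι → (Fin n → ℝ)) : Set (Fin n → ℝ) :=
  {x | ∃ lam : ι → ℝ, (∀ i, 0 ≤ lam i) ∧ x = ∑ i, lam i • r i}

/-- Lattice points (w.r.t. a lattice `Λ`) in the half-open parallelepiped spanned by `r`. -/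
def parL {n : ℕ} {ι : Type} [Fintype ι] (Λ : Set (Fin n → ℝ)) (r : ι → (Fin n → ℝ)) :
    Set (Fin n → ℝ) :=
  {x | (∃ lam : ι → ℝ, (∀ i, 0 ≤ lam i ∧ lam i < 1) ∧ x = ∑ i, lam i • r i) ∧ x ∈ Λ}

/-- Integer points in the half-open parallelepiped spanned by `r`. -/
def par {n : ℕ} {ι : Type} [Fintype ι] (r : ι → (Fin n → ℝ)) : Set (Fin n → ℝ) :=
  parL (intLattice n) r

/-- `h` is a Hilbert basis element of the cone `C` with respect to the lattice `Λ`: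
a nonzero lattice vector of `C` which is not the sum of two nonzero lattice vectors of `C`. -/
def IsHilbertL {n : ℕ} (Λ : Set (Fin n → ℝ)) (C : Set (Fin n → ℝ)) (h : Fin n → ℝ) : Prop :=
  h ∈ C ∧ h ∈ Λ ∧ h ≠ 0 ∧
    ∀ a b : Fin n → ℝ, a ∈ C → b ∈ C → a ∈ Λ → b ∈ Λ → a ≠ 0 → b ≠ 0 → h ≠ a + b

/-- The integer Carathéodory rank of `C` with respect to the lattice `Λ`:
the maximum over lattice points `z ∈ C` of the minimal number of Hilbert basis
elements needed to write `z` as a non-negative integral combination. -/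
def ICRL {n : ℕ} (Λ : Set (Fin n → ℝ)) (C : Set (Fin n → ℝ)) : ℕ :=
  sSup {m : ℕ | ∃ z ∈ C, z ∈ Λ ∧
    m = sInf {k : ℕ | ∃ h : Fin k → (Fin n → ℝ), ∃ c : Fin k → ℕ,
      (∀ i, IsHilbertL Λ C (h i)) ∧ z = ∑ i, (c i : ℝ) • h i}}

/-- The integer Carathéodory rank with respect to the integer lattice `ℤ^n`. -/
def ICR {n : ℕ} (C : Set (Fin n → ℝ)) : ℕ := ICRL (intLattice n) C

/-- The lattice `L ∩ ℤ^n`, where `L` is the real span of the vectors `r i`. -/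
def latticeOf {n : ℕ} {ι : Type} [Fintype ι] (r : ι → (Fin n → ℝ)) : Set (Fin n → ℝ) :=
  {x | x ∈ Submodule.span ℝ (Set.range r) ∧ IsIntegral x}

/-- The dual lattice `Λ* = {x ∈ lin Λ : ⟨y, x⟩ ∈ ℤ for all y ∈ Λ}`. -/
def dualLattice {n : ℕ} (Λ : Set (Fin n → ℝ)) : Set (Fin n → ℝ) :=
  {x | x ∈ Submodule.span ℝ Λ ∧ ∀ y ∈ Λ, ∃ m : ℤ, dot y x = (m : ℝ)}

/-- Orthogonal projection onto the orthogonal complement of `v`. -/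
def projPerp {n : ℕ} (v : Fin n → ℝ) (x : Fin n → ℝ) : Fin n → ℝ :=
  x - (dot x v / dot v v) • v

/-- if `λ > 0` translates the lattice points of the non-negative orthant
exactly onto the lattice points of the open orthant, where the lattice is `Λ = R⁻¹ℤ^n`,
then each `λ_k` is the minimum of `μ_k` over lattice points `μ ≥ 0` with `μ_k ≠ 0`. -/
theorem stmt_16 {n : ℕ} (R : Matrix (Fin n) (Fin n) ℝ)
    (hint : ∀ i j, ∃ z : ℤ, R i j = (z : ℝ)) (hdet : R.det ≠ 0)
    (lam : Fin n → ℝ) (hlam : ∀ i, 0 < lam i)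
    (htrans : (fun x => lam + x) ''
        {x : Fin n → ℝ | (∀ i, 0 ≤ x i) ∧ IsIntegral (R.mulVec x)}
      = {x : Fin n → ℝ | (∀ i, 0 < x i) ∧ IsIntegral (R.mulVec x)}) :
    ∀ k : Fin n, IsLeast
      {t : ℝ | ∃ mu : Fin n → ℝ, (∀ i, 0 ≤ mu i) ∧ IsIntegral (R.mulVec mu) ∧
        mu k ≠ 0 ∧ t = mu k} (lam k) := by
  have h0 : (0 : Fin n → ℝ) ∈ {x : Fin n → ℝ | (∀ i, 0 ≤ x i) ∧ IsIntegral (R.mulVec x)} := by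
    refine ⟨fun i => le_refl 0, fun i => ⟨0, ?_⟩⟩
    simp [Matrix.mulVec_zero]
  have hlamΛ : IsIntegral (R.mulVec lam) := by
    have hmem : lam ∈ {x : Fin n → ℝ | (∀ i, 0 < x i) ∧ IsIntegral (R.mulVec x)} := by
      rw [← htrans]
      exact ⟨0, h0, by simp⟩
    exact hmem.2
  intro k
  constructor
  · exact ⟨lam, fun i => (hlam i).le, hlamΛ, (hlam k).ne', rfl⟩
  · rintro t ⟨mu, hmu0, hmuΛ, hmuk, rfl⟩
    have hmukpos : 0 < mu k := lt_of_le_of_ne (hmu0 k) (Ne.symm hmuk)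
    set e : Fin n → ℝ := fun i => if i = k then 0 else 1 with he
    have heInt : ∀ j, ∃ z : ℤ, e j = (z : ℝ) := by
      intro j; by_cases h : j = k
      · exact ⟨0, by simp [he, h]⟩
      · exact ⟨1, by simp [he, h]⟩
    have hyΛ : IsIntegral (R.mulVec (mu + e)) := by
      intro i
      obtain ⟨a, ha⟩ := hmuΛ i
      have hb : ∃ z : ℤ, R.mulVec e i = (z : ℝ) := by
        choose zr hzr using hint
        choose ze hze using heInt
        refine ⟨∑ j, zr i j * ze j, ?_⟩
        simp only [Matrix.mulVec, dotProduct, hzr, hze]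
        push_cast
        rfl
      obtain ⟨b, hb⟩ := hb
      refine ⟨a + b, ?_⟩
      rw [Matrix.mulVec_add]
      simp only [Pi.add_apply, ha, hb]
      push_cast
      ring
    have hy : mu + e ∈ {x : Fin n → ℝ | (∀ i, 0 < x i) ∧ IsIntegral (R.mulVec x)} := by
      refine ⟨fun i => ?_, hyΛ⟩
      by_cases h : i = k
      · subst h; simpa [he] using hmukpos
      · have h1 := hmu0 i
        simp only [Pi.add_apply, he, if_neg h]
        linarith
    rw [← htrans] at hy
    obtain ⟨x, hx, hxy⟩ := hy
    have hk := congrFun hxy k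
    simp only [Pi.add_apply, he, if_pos rfl, if_true, add_zero] at hk
    have hxk := hx.1 k
    linarith

end ICRPaper
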